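/- Let μ be the product measure on ℝ² of the exponential distribution with rate 1 (density e^{−x} on [0,∞)) and the exponential distribution with rate 2 (density 2e^{−2x} on [0,∞)). Then for every x¹, x² ∈ ℝ, n·( 1 − μ( (−∞, log n + x¹] × (−∞, log n + x²] ) ) → e^{−x¹} as n → ∞. -/

import Mathlib

open MeasureTheory Filter Set

/-- The exponential distribution with rate `r`: density `r * exp (-(r * x))` on `[0, ∞)`. -/
noncomputable def expMeas (r : ℝ) : Measure ℝ :=
  volume.withDensity fun x => ENNReal.ofReal (if 0 ≤ x then r * Real.exp (-(r * x)) else 0)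

instance (r : ℝ) : SFinite (expMeas r) := by unfold expMeas; infer_instance

lemma expMeas_Iic {r : ℝ} (hr : 0 < r) (a : ℝ) (ha : 0 ≤ a) :
    expMeas r (Iic a) = ENNReal.ofReal (1 - Real.exp (-(r * a))) := by
  have h := ProbabilityTheory.lintegral_exponentialPDF_eq_antiDeriv hr a
  rw [if_pos ha] at h
  rw [expMeas, withDensity_apply _ measurableSet_Iic, ← h]
  refine setLIntegral_congr_fun measurableSet_Iic (fun x _ => ?_)
  rw [ProbabilityTheory.exponentialPDF_eq]

theorem exp_pair_domain_of_attraction :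
    ∀ x1 x2 : ℝ,
      Tendsto (fun n : ℕ =>
          (n : ℝ) * (1 - (((expMeas 1).prod (expMeas 2))
            (Iic (Real.log n + x1) ×ˢ Iic (Real.log n + x2))).toReal))
        atTop (nhds (Real.exp (-x1))) := by
  intro x1 x2
  have key : Tendsto (fun n : ℕ =>
      Real.exp (-x1) + Real.exp (-(2*x2)) / n - Real.exp (-x1) * Real.exp (-(2*x2)) / n^2)
      atTop (nhds (Real.exp (-x1))) := by
    have h1 : Tendsto (fun n : ℕ => Real.exp (-(2*x2)) / n) atTop (nhds 0) :=
      tendsto_const_nhds.div_atTop tendsto_natCast_atTop_atTop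
    have h2 : Tendsto (fun n : ℕ => Real.exp (-x1) * Real.exp (-(2*x2)) / n^2) atTop (nhds 0) :=
      tendsto_const_nhds.div_atTop
        ((tendsto_pow_atTop (two_ne_zero)).comp tendsto_natCast_atTop_atTop)
    simpa using (tendsto_const_nhds.add h1).sub h2
  refine key.congr' ?_
  have hx1 : ∀ᶠ n : ℕ in atTop, 0 ≤ Real.log n + x1 := by
    have := tendsto_atTop.mp ((Real.tendsto_log_atTop).comp tendsto_natCast_atTop_atTop) (-x1)
    filter_upwards [this] with n hn
    simp only [Function.comp_apply] at hn; linarith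
  have hx2 : ∀ᶠ n : ℕ in atTop, 0 ≤ Real.log n + x2 := by
    have := tendsto_atTop.mp ((Real.tendsto_log_atTop).comp tendsto_natCast_atTop_atTop) (-x2)
    filter_upwards [this] with n hn
    simp only [Function.comp_apply] at hn; linarith
  filter_upwards [hx1, hx2, eventually_ge_atTop 1] with n h1 h2 hn1
  have hnpos : (0:ℝ) < n := by exact_mod_cast hn1
  have hlog : Real.exp (Real.log n) = n := Real.exp_log hnpos
  have hA : 0 ≤ 1 - Real.exp (-(1 * (Real.log n + x1))) := by
    linarith [Real.exp_le_one_iff.mpr (by nlinarith : -(1 * (Real.log n + x1)) ≤ 0)]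
  have hB : 0 ≤ 1 - Real.exp (-(2 * (Real.log n + x2))) := by
    linarith [Real.exp_le_one_iff.mpr (by nlinarith : -(2 * (Real.log n + x2)) ≤ 0)]
  rw [Measure.prod_prod, expMeas_Iic one_pos _ h1, expMeas_Iic two_pos _ h2,
    ← ENNReal.ofReal_mul hA, ENNReal.toReal_ofReal (by positivity)]
  have ea : Real.exp (-(1 * (Real.log n + x1))) = Real.exp (-x1) / n := by
    rw [show -(1 * (Real.log n + x1)) = -x1 - Real.log n by ring, Real.exp_sub, hlog]
  have eb : Real.exp (-(2 * (Real.log n + x2))) = Real.exp (-(2*x2)) / n^2 := by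
    rw [show -(2 * (Real.log n + x2)) = -(2*x2) - (Real.log n + Real.log n) by ring,
      Real.exp_sub, Real.exp_add, hlog]
    ring
  rw [ea, eb]
  field_simp
  ring
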